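/- arXiv:math/0003091 — 4 statements merged into one kernel-verified Lean document; each statement's English description precedes it below -/
import Mathlib

section
/- Let d, h : [0,∞) → ℝ be nonnegative functions, and let 0 < k ≤ K be constants. Suppose that for all t ≥ 0: e^{kt} ≤ h(0)/h(t) ≤ e^{Kt}, and (2/k)·sinh(k·d(t)/2) ≤ h(t) ≤ (2/K)·sinh(K·d(t)/2), with h(t) > 0. If additionally d(0) ≤ 2/K and d is nonincreasing, then for all t ≥ 0: e^{kt}/2 ≤ d(0)/d(t) ≤ 2·e^{Kt}, provided d(t) > 0. -/
lemma cosh_lt_two {x : ℝ} (h0 : 0 ≤ x) (h1 : x ≤ 1) : Real.cosh x < 2 := by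
  have h2 : Real.cosh x ≤ Real.cosh 1 := by
    rw [Real.cosh_le_cosh]
    rw [abs_of_nonneg h0, abs_one]; exact h1
  have h3 : Real.cosh 1 = (Real.exp 1 + Real.exp (-1)) / 2 := Real.cosh_eq 1
  have h4 : Real.exp 1 < 2.7182818286 := Real.exp_one_lt_d9
  have h5 : Real.exp (-1) < 1 := by
    rw [Real.exp_lt_one_iff]; norm_num
  nlinarith

lemma sinh_le_two_mul {x : ℝ} (h0 : 0 ≤ x) (h1 : x ≤ 1) : Real.sinh x ≤ 2 * x := by
  have key : MonotoneOn (fun y => 2 * y - Real.sinh y) (Set.Icc 0 1) := by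
    apply monotoneOn_of_deriv_nonneg (convex_Icc 0 1)
    · exact (continuous_const.mul continuous_id |>.sub Real.continuous_sinh).continuousOn
    · intro y hy
      exact ((((hasDerivAt_id y).const_mul 2).sub (Real.hasDerivAt_sinh y)).differentiableAt).differentiableWithinAt
    · intro y hy
      rw [interior_Icc, Set.mem_Ioo] at hy
      have hd : deriv (fun y => 2 * y - Real.sinh y) y = 2 - Real.cosh y := by
        have := (((hasDerivAt_id y).const_mul 2).sub (Real.hasDerivAt_sinh y)).deriv
        exact this.trans (by ring)
      rw [hd]
      have := cosh_lt_two hy.1.le hy.2.le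
      linarith
  have h := key (Set.mem_Icc.2 ⟨le_rfl, zero_le_one⟩) (Set.mem_Icc.2 ⟨h0, h1⟩) h0
  simp only [Real.sinh_zero] at h
  linarith

/-- Exponential convergence of asymptotic geodesics: if `d t` is the ambient distance and
`h t` the horospherical distance between two asymptotic geodesics at time `t`, subject to
the stated comparison inequalities, then `e^{kt}/2 ≤ d 0 / d t ≤ 2 e^{Kt}`. -/
theorem exp_convergence_of_geodesics (d h : ℝ → ℝ) (k K : ℝ)
    (hk : 0 < k) (hkK : k ≤ K)
    (hd_nonneg : ∀ t, 0 ≤ t → 0 ≤ d t)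
    (hh_pos : ∀ t, 0 ≤ t → 0 < h t)
    (hexp : ∀ t, 0 ≤ t →
      Real.exp (k * t) ≤ h 0 / h t ∧ h 0 / h t ≤ Real.exp (K * t))
    (hsinh : ∀ t, 0 ≤ t →
      (2 / k) * Real.sinh (k * d t / 2) ≤ h t ∧ h t ≤ (2 / K) * Real.sinh (K * d t / 2))
    (hd0 : d 0 ≤ 2 / K)
    (hmono : ∀ s t, 0 ≤ s → s ≤ t → d t ≤ d s) :
    ∀ t, 0 ≤ t → 0 < d t →
      Real.exp (k * t) / 2 ≤ d 0 / d t ∧ d 0 / d t ≤ 2 * Real.exp (K * t) := by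
  intro t ht hdt
  have hK : 0 < K := lt_of_lt_of_le hk hkK
  have hd0pos : 0 < d 0 := lt_of_lt_of_le hdt (hmono 0 t le_rfl ht)
  have hdt0 : d t ≤ d 0 := hmono 0 t le_rfl ht
  have hh0 : 0 < h 0 := hh_pos 0 le_rfl
  have hht : 0 < h t := hh_pos t ht
  -- bound on arguments of sinh
  have harg0 : K * d 0 / 2 ≤ 1 := by
    have : K * d 0 ≤ K * (2 / K) := by
      exact mul_le_mul_of_nonneg_left hd0 hK.le
    rw [mul_div_cancel₀ _ hK.ne'] at this
    linarith
  have hargt : K * d t / 2 ≤ 1 := by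
    have : K * d t ≤ K * d 0 := mul_le_mul_of_nonneg_left hdt0 hK.le
    linarith
  have harg0n : 0 ≤ K * d 0 / 2 := by positivity
  have hargtn : 0 ≤ K * d t / 2 := by positivity
  -- h 0 ≤ 2 * d 0
  have hA : h 0 ≤ 2 * d 0 := by
    have h1 := (hsinh 0 le_rfl).2
    have h2 : Real.sinh (K * d 0 / 2) ≤ 2 * (K * d 0 / 2) := sinh_le_two_mul harg0n harg0
    have h3 : (2 / K) * Real.sinh (K * d 0 / 2) ≤ (2 / K) * (2 * (K * d 0 / 2)) := by
      apply mul_le_mul_of_nonneg_left h2 (by positivity)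
    have h4 : (2 / K) * (2 * (K * d 0 / 2)) = 2 * d 0 := by
      field_simp
    linarith
  -- h t ≤ 2 * d t
  have hD : h t ≤ 2 * d t := by
    have h1 := (hsinh t ht).2
    have h2 : Real.sinh (K * d t / 2) ≤ 2 * (K * d t / 2) := sinh_le_two_mul hargtn hargt
    have h3 : (2 / K) * Real.sinh (K * d t / 2) ≤ (2 / K) * (2 * (K * d t / 2)) := by
      apply mul_le_mul_of_nonneg_left h2 (by positivity)
    have h4 : (2 / K) * (2 * (K * d t / 2)) = 2 * d t := by
      field_simp
    linarith
  -- d t ≤ h t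
  have hB : d t ≤ h t := by
    have h1 := (hsinh t ht).1
    have h2 : k * d t / 2 ≤ Real.sinh (k * d t / 2) :=
      Real.self_le_sinh_iff.2 (by positivity)
    have h3 : (2 / k) * (k * d t / 2) ≤ (2 / k) * Real.sinh (k * d t / 2) :=
      mul_le_mul_of_nonneg_left h2 (by positivity)
    have h4 : (2 / k) * (k * d t / 2) = d t := by
      field_simp
    linarith
  -- d 0 ≤ h 0
  have hC : d 0 ≤ h 0 := by
    have h1 := (hsinh 0 le_rfl).1
    have h2 : k * d 0 / 2 ≤ Real.sinh (k * d 0 / 2) :=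
      Real.self_le_sinh_iff.2 (by positivity)
    have h3 : (2 / k) * (k * d 0 / 2) ≤ (2 / k) * Real.sinh (k * d 0 / 2) :=
      mul_le_mul_of_nonneg_left h2 (by positivity)
    have h4 : (2 / k) * (k * d 0 / 2) = d 0 := by
      field_simp
    linarith
  obtain ⟨hlow, hhigh⟩ := hexp t ht
  -- exp (k t) * h t ≤ h 0  and  h 0 ≤ exp (K t) * h t
  have hlow' : Real.exp (k * t) * h t ≤ h 0 := by
    rw [div_le_iff₀ hht] at *
    exact (le_div_iff₀ hht).1 hlow
  have hhigh' : h 0 ≤ Real.exp (K * t) * h t := by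
    exact (div_le_iff₀ hht).1 hhigh
  constructor
  · rw [div_le_div_iff₀ (by norm_num : (0:ℝ) < 2) hdt]
    nlinarith [Real.exp_pos (k * t)]
  · rw [div_le_iff₀ hdt]
    nlinarith [Real.exp_pos (K * t)]
end

section
/- Let G act on a simplicial tree T without edge inversions and with one orbit of edges. Let P ≤ G be a subgroup not fixing any vertex, let τ be the unique minimal P-invariant subtree, and suppose that for every g ∈ G such that g⁻¹e is an edge of τ (where e is a fixed edge of T with stabilizer contained in P), the intersection g⁻¹(Stab e)g ∩ P is infinite, and suppose every maximal subgroup of G containing an infinite intersection with P equals P and is its own normalizer. Then P equals the setwise stabilizer of τ, and every edge of T lies in exactly one G-translate of τ. -/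
/-- Bass–Serre setup: `G` acts on a tree `T` without inversions with one orbit of edges,
`P ≤ G` fixes no vertex, `τ` is the unique minimal `P`-invariant subtree, `e = (a,b)` is an
edge with stabilizer contained in `P`; if for every `g` with `g⁻¹e` an edge of `τ` the group
`g⁻¹ (Stab e) g ∩ P` is infinite, and any `g` with `g⁻¹ P g ∩ P` infinite lies in `P`
(encoding that the maximal subgroup containing such intersections is `P` and is its own
normalizer), then `P` is the setwise stabilizer of `τ` and every edge of `T` lies in exactly
one `G`-translate of `τ`. -/
theorem stabilizer_of_minimal_subtree {G V : Type*} [Group G]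
    (T : SimpleGraph V) (hT : T.IsTree)
    (act : G →* Equiv.Perm V)
    (hadj : ∀ (g : G) (u v : V), T.Adj u v → T.Adj (act g u) (act g v))
    (noinv : ∀ (g : G) (u v : V), T.Adj u v → ¬(act g u = v ∧ act g v = u))
    (oneorbit : ∀ u v u' v' : V, T.Adj u v → T.Adj u' v' →
      ∃ g : G, (act g u = u' ∧ act g v = v') ∨ (act g u = v' ∧ act g v = u'))
    (P : Subgroup G)
    (hPnofix : ¬∃ v : V, ∀ p ∈ P, act p v = v)
    (τ : Set V) (hτne : τ.Nonempty)
    (hτinv : ∀ p ∈ P, act p '' τ = τ)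
    (hτsub : ∀ u ∈ τ, ∀ v ∈ τ, ∀ q : T.Walk u v, ∀ x ∈ q.support, x ∈ τ)
    (hτmin : ∀ σ : Set V, σ.Nonempty → (∀ p ∈ P, act p '' σ = σ) →
      (∀ u ∈ σ, ∀ v ∈ σ, ∀ q : T.Walk u v, ∀ x ∈ q.support, x ∈ σ) → σ ⊆ τ → σ = τ)
    (a b : V) (hab : T.Adj a b)
    (hstabP : ∀ g : G, act g a = a → act g b = b → g ∈ P)
    (hinf : ∀ g : G, act g⁻¹ a ∈ τ → act g⁻¹ b ∈ τ →
      {y : G | (act (g * y * g⁻¹) a = a ∧ act (g * y * g⁻¹) b = b) ∧ y ∈ P}.Infinite)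
    (hmaxP : ∀ g : G, {y : G | y ∈ P ∧ g * y * g⁻¹ ∈ P}.Infinite → g ∈ P) :
    (∀ g : G, act g '' τ = τ ↔ g ∈ P) ∧
      (∀ u v : V, T.Adj u v →
        ∃! S : Set V, (∃ g : G, S = act g '' τ) ∧ u ∈ S ∧ v ∈ S) := by
  -- `act` of a product / inverse
  have actmul : ∀ (g h : G) (x : V), act (g * h) x = act g (act h x) := by
    intro g h x; rw [map_mul]; rfl
  -- key lemma: if `g⁻¹` sends the edge `e = (a,b)` into `τ`, then `g ∈ P`.
  have key : ∀ g : G, act g⁻¹ a ∈ τ → act g⁻¹ b ∈ τ → g ∈ P := by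
    intro g ha hb
    apply hmaxP g
    apply (hinf g ha hb).mono
    rintro y ⟨⟨h1, h2⟩, hyP⟩
    exact ⟨hyP, hstabP _ h1 h2⟩
  -- key lemma 2: if an edge `(x,y)` lies in both `τ` and `g • τ`, then `g ∈ P`.
  have key2 : ∀ (g : G) (x y : V), T.Adj x y → x ∈ τ → y ∈ τ →
      act g⁻¹ x ∈ τ → act g⁻¹ y ∈ τ → g ∈ P := by
    intro g x y hxy hx hy hgx hgy
    obtain ⟨k, hk⟩ := oneorbit x y a b hxy hab
    have hka : act k⁻¹ a ∈ τ ∧ act k⁻¹ b ∈ τ := by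
      rcases hk with ⟨h1, h2⟩ | ⟨h1, h2⟩
      · constructor
        · rw [← h1, ← actmul, inv_mul_cancel, map_one]; exact hx
        · rw [← h2, ← actmul, inv_mul_cancel, map_one]; exact hy
      · constructor
        · rw [← h2, ← actmul, inv_mul_cancel, map_one]; exact hy
        · rw [← h1, ← actmul, inv_mul_cancel, map_one]; exact hx
    have hkP : k ∈ P := key k hka.1 hka.2
    have hkg : k * g ∈ P := by
      apply key (k * g)
      · have : act (k * g)⁻¹ a = act g⁻¹ (act k⁻¹ a) := by
          rw [mul_inv_rev, actmul]
        rcases hk with ⟨h1, _⟩ | ⟨h1, h2⟩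
        · rw [this, ← h1, ← actmul, ← actmul, inv_mul_cancel_right]; exact hgx
        · rw [this, ← h2, ← actmul, ← actmul, inv_mul_cancel_right]; exact hgy
      · have : act (k * g)⁻¹ b = act g⁻¹ (act k⁻¹ b) := by
          rw [mul_inv_rev, actmul]
        rcases hk with ⟨_, h2⟩ | ⟨h1, h2⟩
        · rw [this, ← h2, ← actmul, ← actmul, inv_mul_cancel_right]; exact hgy
        · rw [this, ← h1, ← actmul, ← actmul, inv_mul_cancel_right]; exact hgx
    have := mul_mem (inv_mem hkP) hkg
    rwa [inv_mul_cancel_left] at this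
  -- τ contains an edge
  obtain ⟨u, v, huv, hu, hv⟩ : ∃ u v : V, T.Adj u v ∧ u ∈ τ ∧ v ∈ τ := by
    obtain ⟨w, hw⟩ := hτne
    have h2 : ∃ w' ∈ τ, w' ≠ w := by
      by_contra h
      push_neg at h
      exact hPnofix ⟨w, fun p hp => by
        have : act p w ∈ act p '' τ := Set.mem_image_of_mem _ hw
        rw [hτinv p hp] at this
        exact h _ this⟩
    obtain ⟨w', hw', hne⟩ := h2
    obtain ⟨q⟩ := hT.isConnected.preconnected w w'
    cases q with
    | nil => exact absurd rfl hne.symm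
    | cons h q' =>
      rename_i c
      refine ⟨w, c, h, hw, ?_⟩
      exact hτsub w hw w' hw' (SimpleGraph.Walk.cons h q') c
        (by simp [SimpleGraph.Walk.support_cons, SimpleGraph.Walk.start_mem_support])
  -- a and b lie in τ
  have hamem : a ∈ τ ∧ b ∈ τ := by
    obtain ⟨k, hk⟩ := oneorbit u v a b huv hab
    have hka : act k⁻¹ a ∈ τ ∧ act k⁻¹ b ∈ τ := by
      rcases hk with ⟨h1, h2⟩ | ⟨h1, h2⟩
      · constructor
        · rw [← h1, ← actmul, inv_mul_cancel, map_one]; exact hu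
        · rw [← h2, ← actmul, inv_mul_cancel, map_one]; exact hv
      · constructor
        · rw [← h2, ← actmul, inv_mul_cancel, map_one]; exact hv
        · rw [← h1, ← actmul, inv_mul_cancel, map_one]; exact hu
    have hkP : k ∈ P := key k hka.1 hka.2
    have himg := hτinv k hkP
    constructor
    · rw [← himg]
      rcases hk with ⟨h1, _⟩ | ⟨_, h2⟩
      · exact ⟨u, hu, h1⟩
      · exact ⟨v, hv, h2⟩
    · rw [← himg]
      rcases hk with ⟨_, h2⟩ | ⟨h1, _⟩
      · exact ⟨v, hv, h2⟩
      · exact ⟨u, hu, h1⟩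
  -- Part 1
  have part1 : ∀ g : G, act g '' τ = τ ↔ g ∈ P := by
    intro g
    constructor
    · intro hgτ
      have hga : act g a ∈ τ := by rw [← hgτ]; exact ⟨a, hamem.1, rfl⟩
      have hgb : act g b ∈ τ := by rw [← hgτ]; exact ⟨b, hamem.2, rfl⟩
      have : g⁻¹ ∈ P := by
        apply key g⁻¹ <;> rw [inv_inv]
        exacts [hga, hgb]
      simpa using inv_mem this
    · exact hτinv g
  refine ⟨part1, ?_⟩
  intro x y hxy
  obtain ⟨g, hg⟩ := oneorbit a b x y hab hxy
  refine ⟨act g '' τ, ⟨⟨g, rfl⟩, ?_, ?_⟩, ?_⟩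
  · rcases hg with ⟨h1, _⟩ | ⟨_, h2⟩
    · exact ⟨a, hamem.1, h1⟩
    · exact ⟨b, hamem.2, h2⟩
  · rcases hg with ⟨_, h2⟩ | ⟨h1, _⟩
    · exact ⟨b, hamem.2, h2⟩
    · exact ⟨a, hamem.1, h1⟩
  · rintro S ⟨⟨g', rfl⟩, hxS, hyS⟩
    -- show `act g' '' τ = act g '' τ`
    have hinvmem : ∀ (h : G) (z : V), z ∈ act h '' τ → act h⁻¹ z ∈ τ := by
      rintro h z ⟨w, hw, rfl⟩
      rw [← actmul, inv_mul_cancel, map_one]; exact hw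
    -- the edge (act g'⁻¹ x, act g'⁻¹ y) lies in τ and in (g'⁻¹ g) • τ
    set x' := act g'⁻¹ x with hx'
    set y' := act g'⁻¹ y with hy'
    have hx't : x' ∈ τ := hinvmem g' x hxS
    have hy't : y' ∈ τ := hinvmem g' y hyS
    have hadj' : T.Adj x' y' := hadj g'⁻¹ x y hxy
    have hxg : x ∈ act g '' τ := by
      rcases hg with ⟨h1, _⟩ | ⟨_, h2⟩
      · exact ⟨a, hamem.1, h1⟩
      · exact ⟨b, hamem.2, h2⟩
    have hyg : y ∈ act g '' τ := by
      rcases hg with ⟨_, h2⟩ | ⟨h1, _⟩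
      · exact ⟨b, hamem.2, h2⟩
      · exact ⟨a, hamem.1, h1⟩
    have hhP : g'⁻¹ * g ∈ P := by
      apply key2 (g'⁻¹ * g) x' y' hadj' hx't hy't
      · rw [mul_inv_rev, inv_inv, hx', ← actmul, mul_inv_cancel_right]
        exact hinvmem g x hxg
      · rw [mul_inv_rev, inv_inv, hy', ← actmul, mul_inv_cancel_right]
        exact hinvmem g y hyg
    have hττ : act (g'⁻¹ * g) '' τ = τ := (part1 _).mpr hhP
    calc act g' '' τ = act g' '' (act (g'⁻¹ * g) '' τ) := by rw [hττ]
        _ = act g '' τ := by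
          rw [← Set.image_comp]
          congr 1
          ext z
          simp [← actmul, mul_inv_cancel_left]
end

section
/- Let T be a simplicial tree with a group G acting on it, and let Q be a collection of subtrees of T such that every edge of T lies in exactly one member of Q. Define a bipartite graph S(Q) with vertex set V(T) ⊔ Q, where v ∈ V(T) is adjacent to η ∈ Q iff v is a vertex of η. Then S(Q) is a tree. -/
/-- The bipartite incidence graph `S(Q)`: vertices are vertices of the tree together with the
members of `Q`, and `v` is adjacent to `η` iff `v ∈ η`. -/
def incidenceGraph {V : Type*} (Q : Set (Set V)) : SimpleGraph (V ⊕ ↥Q) where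
  Adj a b :=
    (∃ (v : V) (η : ↥Q), a = Sum.inl v ∧ b = Sum.inr η ∧ v ∈ (η : Set V)) ∨
    (∃ (v : V) (η : ↥Q), b = Sum.inl v ∧ a = Sum.inr η ∧ v ∈ (η : Set V))
  symm := by
    constructor
    intro a b h
    rcases h with ⟨v, η, h1, h2, h3⟩ | ⟨v, η, h1, h2, h3⟩
    · exact Or.inr ⟨v, η, h1, h2, h3⟩
    · exact Or.inl ⟨v, η, h1, h2, h3⟩
  loopless := by
    constructor
    rintro a (⟨v, η, rfl, h, -⟩ | ⟨v, η, rfl, h, -⟩) <;> simp at h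

section Aux

open SimpleGraph

variable {V : Type*} {Q : Set (Set V)}

/-- Unpacking adjacency starting from an `inl` vertex. -/
lemma incidence_adj_inl {u : V} {b : V ⊕ ↥Q} (h : (incidenceGraph Q).Adj (Sum.inl u) b) :
    ∃ η : ↥Q, b = Sum.inr η ∧ u ∈ (η : Set V) := by
  rcases h with ⟨v, η, h1, h2, h3⟩ | ⟨v, η, h1, h2, h3⟩
  · exact ⟨η, h2, by injection h1 with h1; exact h1 ▸ h3⟩
  · exact absurd h2 (by simp)

/-- Unpacking adjacency starting from an `inr` vertex. -/
lemma incidence_adj_inr {η : ↥Q} {b : V ⊕ ↥Q} (h : (incidenceGraph Q).Adj (Sum.inr η) b) :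
    ∃ u : V, b = Sum.inl u ∧ u ∈ (η : Set V) := by
  rcases h with ⟨v, η', h1, h2, h3⟩ | ⟨v, η', h1, h2, h3⟩
  · exact absurd h1 (by simp)
  · refine ⟨v, h1, ?_⟩
    injection h2 with h2
    exact h2 ▸ h3

end Aux

/-- If `T` is a simplicial tree with a group `G` acting on it, and `Q` is a collection of
(nonempty) subtrees of `T` such that every edge of `T` lies in exactly one member of `Q`,
then the bipartite incidence graph `S(Q)` is a tree. -/
theorem incidenceGraph_isTree {V G : Type*} [Group G]
    (T : SimpleGraph V) (hT : T.IsTree)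
    (act : G →* Equiv.Perm V)
    (hadj : ∀ (g : G) (u v : V), T.Adj u v → T.Adj (act g u) (act g v))
    (Q : Set (Set V))
    (hne : ∀ η ∈ Q, η.Nonempty)
    (hsubtree : ∀ η ∈ Q, ∀ u ∈ η, ∀ v ∈ η, ∃ p : T.Walk u v, ∀ x ∈ p.support, x ∈ η)
    (hedge : ∀ u v : V, T.Adj u v →
      ∃! η : ↥Q, u ∈ (η : Set V) ∧ v ∈ (η : Set V)) :
    (incidenceGraph Q).IsTree := by
  classical
  obtain ⟨hTc, hTa⟩ := hT
  -- a path inside a subtree between any two of its vertices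
  have hpath : ∀ (η : ↥Q), ∀ u ∈ (η : Set V), ∀ w ∈ (η : Set V),
      ∃ p : T.Walk u w, p.IsPath ∧ ∀ x ∈ p.support, x ∈ (η : Set V) := by
    intro η u hu w hw
    obtain ⟨p0, hp0⟩ := hsubtree η η.2 u hu w hw
    exact ⟨p0.bypass, p0.bypass_isPath,
      fun x hx => hp0 x (p0.support_bypass_subset hx)⟩
  -- uniqueness of paths in the tree `T`
  have huniq : ∀ {u w : V} (p q : T.Walk u w), p.IsPath → q.IsPath → p = q := by
    intro u w p q hp hq
    have := hTa.path_unique ⟨p, hp⟩ ⟨q, hq⟩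
    exact congrArg Subtype.val this
  -- Key lemma: if `W` is a walk in `S(Q)` between `inl u` and `inl w`, then every edge of
  -- the `T`-path from `u` to `w` lies in some subtree appearing in the support of `W`.
  have lemC : ∀ (n : ℕ) {a b : V ⊕ ↥Q} (W : (incidenceGraph Q).Walk a b),
      W.length = n → ∀ u w : V, a = Sum.inl u → b = Sum.inl w →
      ∀ p : T.Walk u w, p.IsPath → ∀ e ∈ p.edges,
      ∃ η' : ↥Q, Sum.inr η' ∈ W.support ∧ ∀ x ∈ e, x ∈ (η' : Set V) := by
    intro n
    induction n using Nat.strong_induction_on with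
    | _ n IH =>
      intro a b W hlen u w ha hb p hp e he
      subst ha
      cases W with
      | nil =>
        -- then `u = w` and `p` must be the nil path
        injection hb with hb
        subst hb
        cases p with
        | nil => simp at he
        | cons h' p' =>
          rw [SimpleGraph.Walk.cons_isPath_iff] at hp
          exact absurd p'.end_mem_support hp.2
      | cons h W' =>
        obtain ⟨η₁, rfl, hu₁⟩ := incidence_adj_inl h
        cases W' with
        | nil => simp at hb
        | cons h2 W'' =>
          obtain ⟨u', rfl, hu'₁⟩ := incidence_adj_inr h2
          -- the path from `u` to `u'` inside `η₁`
          obtain ⟨q1, hq1p, hq1s⟩ := hpath η₁ u hu₁ u' hu'₁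
          -- some path from `u'` to `w`
          obtain ⟨r⟩ := hTc.preconnected u' w
          set q2 : T.Walk u' w := r.bypass with hq2def
          have hq2p : q2.IsPath := r.bypass_isPath
          have hpe : p = (q1.append q2).bypass :=
            huniq _ _ hp (q1.append q2).bypass_isPath
          have hemem : e ∈ q1.edges ++ q2.edges := by
            rw [← SimpleGraph.Walk.edges_append]
            exact (q1.append q2).edges_bypass_subset (hpe ▸ he)
          rcases List.mem_append.mp hemem with h1 | h1
          · refine ⟨η₁, by simp, ?_⟩
            induction e using Sym2.ind with
            | _ x y =>
              intro z hz
              rcases Sym2.mem_iff.mp hz with rfl | rfl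
              · exact hq1s z (q1.fst_mem_support_of_mem_edges h1)
              · exact hq1s z (q1.snd_mem_support_of_mem_edges h1)
          · have hlt : W''.length < n := by
              subst hlen
              simp [SimpleGraph.Walk.length_cons]
            obtain ⟨η', hη's, hη'e⟩ :=
              IH W''.length hlt W'' rfl u' w rfl hb q2 hq2p e h1
            exact ⟨η', by simp [hη's], hη'e⟩
  -- Connectivity
  have hreach : ∀ u w : V, T.Walk u w →
      (incidenceGraph Q).Reachable (Sum.inl u) (Sum.inl w) := by
    intro u w p
    induction p with
    | nil => rfl
    | @cons u x w h p ih =>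
      obtain ⟨η, ⟨hu, hx⟩, -⟩ := hedge u x h
      have h1 : (incidenceGraph Q).Adj (Sum.inl u) (Sum.inr η) :=
        Or.inl ⟨u, η, rfl, rfl, hu⟩
      have h2 : (incidenceGraph Q).Adj (Sum.inr η) (Sum.inl x) :=
        Or.inr ⟨x, η, rfl, rfl, hx⟩
      exact (h1.reachable.trans h2.reachable).trans ih
  have hconn : (incidenceGraph Q).Connected := by
    have hVne : Nonempty V := hTc.nonempty
    haveI : Nonempty (V ⊕ ↥Q) := ⟨Sum.inl (Classical.arbitrary V)⟩
    refine ⟨fun a b => ?_⟩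
    have key : ∀ a : V ⊕ ↥Q, ∃ u : V, (incidenceGraph Q).Reachable a (Sum.inl u) := by
      intro a
      rcases a with u | η
      · exact ⟨u, SimpleGraph.Reachable.refl _⟩
      · obtain ⟨v, hv⟩ := hne η η.2
        exact ⟨v, (SimpleGraph.Adj.reachable (Or.inr ⟨v, η, rfl, rfl, hv⟩))⟩
    obtain ⟨u, hu⟩ := key a
    obtain ⟨w, hw⟩ := key b
    obtain ⟨p⟩ := hTc.preconnected u w
    exact (hu.trans (hreach u w p)).trans hw.symm
  -- Acyclicity
  have hacyc_inr : ∀ (η : ↥Q) (c : (incidenceGraph Q).Walk (Sum.inr η) (Sum.inr η)),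
      ¬c.IsCycle := by
    intro η c hc
    cases c with
    | nil => exact hc.ne_nil rfl
    | cons h p =>
      obtain ⟨u, rfl, huη⟩ := incidence_adj_inr h
      -- decompose `p` from the back
      have hpn : (Sum.inr η : V ⊕ ↥Q) ≠ Sum.inl u := by simp
      obtain ⟨b2, h2, q, hq⟩ := SimpleGraph.Walk.exists_eq_cons_of_ne hpn p.reverse
      obtain ⟨w, rfl, hwη⟩ := incidence_adj_inr h2
      -- `u ≠ w` from the trail condition
      have hedges : (SimpleGraph.Walk.cons h p).edges = s(Sum.inr η, Sum.inl u) :: p.edges := rfl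
      have hnodup : (s(Sum.inr η, Sum.inl u) :: p.edges).Nodup := by
        rw [← hedges]; exact hc.isTrail.edges_nodup
      have hlast : s(Sum.inr η, Sum.inl w) ∈ p.edges := by
        have : s(Sum.inr η, Sum.inl w) ∈ p.reverse.edges := by
          rw [hq]; simp
        simpa using this
      have huw : u ≠ w := by
        rintro rfl
        exact (List.nodup_cons.mp hnodup).1 hlast
      -- `inr η` is not in the support of `q`
      have hps : p.support.Nodup := by
        have := hc.support_nodup
        simpa using this
      have hηq : (Sum.inr η : V ⊕ ↥Q) ∉ q.support := by
        intro hmem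
        have h1 : p.support.reverse = Sum.inr η :: q.support := by
          rw [← SimpleGraph.Walk.support_reverse, hq]; simp
        have h2 : p.support.reverse.Nodup := List.nodup_reverse.mpr hps
        rw [h1] at h2
        exact (List.nodup_cons.mp h2).1 hmem
      -- the `T`-path from `w` to `u` inside `η`
      obtain ⟨pT, hpTp, hpTs⟩ := hpath η w hwη u huη
      -- it is nontrivial, take its first edge
      obtain ⟨x, hax, pT', hpT'⟩ := SimpleGraph.Walk.exists_eq_cons_of_ne (Ne.symm huw) pT
      have hx : x ∈ (η : Set V) := by
        apply hpTs
        rw [hpT']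
        simp [SimpleGraph.Walk.support_cons]
      have hefst : s(w, x) ∈ pT.edges := by rw [hpT']; simp
      obtain ⟨η', hη's, hη'e⟩ := lemC q.length q rfl w u rfl rfl pT hpTp s(w, x) hefst
      -- but then the `T`-edge `{w, x}` lies in two distinct members of `Q`
      have hηη' : η' ≠ η := by
        rintro rfl
        exact hηq hη's
      obtain ⟨η₀, -, hη₀u⟩ := hedge w x hax
      have e1 : η' = η₀ := hη₀u η' ⟨hη'e w (by simp), hη'e x (by simp)⟩
      have e2 : η = η₀ := hη₀u η ⟨hwη, hx⟩
      exact hηη' (e1.trans e2.symm)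
  have hacyc : (incidenceGraph Q).IsAcyclic := by
    intro a c hc
    rcases a with v | η
    · cases c with
      | nil => exact hc.ne_nil rfl
      | cons h p =>
        obtain ⟨η, rfl, -⟩ := incidence_adj_inl h
        have hmem : (Sum.inr η : V ⊕ ↥Q) ∈ (SimpleGraph.Walk.cons h p).support := by
          simp [SimpleGraph.Walk.support_cons]
        exact hacyc_inr η _ (hc.rotate hmem)
    · exact hacyc_inr η c hc
  exact ⟨hconn, hacyc⟩
end

section
/- Fix constants 0 < k ≤ K and reals 0 < σ < ε < 1. Suppose a geodesic ray γ in a cusp crosses the ε-injectivity-radius level at time t_ε ∈ [0, d] and the σ-level at time t_σ > t_ε, and that for group elements g, h one has d(g γ(t_σ), γ(t_σ)) = 2σ, d(g γ(t_ε), γ(t_ε)) ≥ 2ε, d(h γ(t_ε), γ(t_ε)) = 2ε, d(h γ(t_σ), γ(t_σ)) ≥ 2σ, and the exponential comparison e^{k(t−s)}/2 ≤ d(φγ(s), γ(s))/d(φγ(t), γ(t)) ≤ 2e^{K(t−s)} for t > s and isometries φ. Then K^{-1}·ln(ε/(2σ)) ≤ t_σ − t_ε ≤ k^{-1}·ln(2ε/σ).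 -/
/-- Cusp travel-time estimate: with the exponential displacement comparison along a geodesic
ray in a cusp, the time to travel from the `ε`-injectivity level to the `σ`-level is pinned
between `K⁻¹ ln(ε/(2σ))` and `k⁻¹ ln(2ε/σ)`. Here `u t = d(g γ(t), γ(t))` and
`v t = d(h γ(t), γ(t))` are the displacement functions of the group elements `g`, `h`. -/
theorem cusp_travel_time (k K σ ε d tε tσ : ℝ) (u v : ℝ → ℝ)
    (hk : 0 < k) (hkK : k ≤ K)
    (hσ : 0 < σ) (hσε : σ < ε) (hε : ε < 1)
    (htε0 : 0 ≤ tε) (htεd : tε ≤ d) (htεσ : tε < tσ)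
    (hu_pos : ∀ t, 0 < u t) (hv_pos : ∀ t, 0 < v t)
    (huσ : u tσ = 2 * σ) (huε : 2 * ε ≤ u tε)
    (hvε : v tε = 2 * ε) (hvσ : 2 * σ ≤ v tσ)
    (hcomp_u : ∀ s t, s < t →
      Real.exp (k * (t - s)) / 2 ≤ u s / u t ∧ u s / u t ≤ 2 * Real.exp (K * (t - s)))
    (hcomp_v : ∀ s t, s < t →
      Real.exp (k * (t - s)) / 2 ≤ v s / v t ∧ v s / v t ≤ 2 * Real.exp (K * (t - s))) :
    K⁻¹ * Real.log (ε / (2 * σ)) ≤ tσ - tε ∧ tσ - tε ≤ k⁻¹ * Real.log (2 * ε / σ) := by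
  have hK : 0 < K := lt_of_lt_of_le hk hkK
  obtain ⟨_, hu2⟩ := hcomp_u tε tσ htεσ
  obtain ⟨hv1, _⟩ := hcomp_v tε tσ htεσ
  have huσpos : (0:ℝ) < 2 * σ := by linarith
  constructor
  · -- lower bound from u
    have h1 : (2 * ε) / (2 * σ) ≤ 2 * Real.exp (K * (tσ - tε)) := by
      calc (2 * ε) / (2 * σ) ≤ u tε / u tσ := by
            rw [huσ]; exact div_le_div_of_nonneg_right huε huσpos.le
        _ ≤ _ := hu2
    have h2 : ε / (2 * σ) ≤ Real.exp (K * (tσ - tε)) := by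
      rw [div_le_iff₀ huσpos] at h1 ⊢
      nlinarith [Real.exp_pos (K * (tσ - tε))]
    have h3 : Real.log (ε / (2 * σ)) ≤ K * (tσ - tε) := by
      have := Real.log_le_log (div_pos (by linarith) huσpos) h2
      rwa [Real.log_exp] at this
    rw [inv_mul_le_iff₀ hK]
    linarith
  · -- upper bound from v
    have hvσpos := hv_pos tσ
    have h1 : Real.exp (k * (tσ - tε)) / 2 ≤ (2 * ε) / (2 * σ) := by
      calc Real.exp (k * (tσ - tε)) / 2 ≤ v tε / v tσ := hv1
        _ ≤ (2 * ε) / (2 * σ) := by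
            rw [hvε]; exact div_le_div_of_nonneg_left (by linarith) huσpos hvσ
    have h2 : Real.exp (k * (tσ - tε)) ≤ 2 * ε / σ := by
      rw [div_le_div_iff₀ (by norm_num) huσpos] at h1
      rw [le_div_iff₀ hσ]
      nlinarith
    have h3 : k * (tσ - tε) ≤ Real.log (2 * ε / σ) := by
      have := Real.log_le_log (Real.exp_pos _) h2
      rwa [Real.log_exp] at this
    rw [le_inv_mul_iff₀ hk]
    linarith
end
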